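/- Let φ₀, φ₁ be real numbers with 0 < −φ₀ < φ₁ < π. If p(0) > 0 then p(θ) ≠ 0 for every θ ≥ 0. If p(0) ≤ 0 then there is exactly one θ ≥ 0 with p(θ) = 0; moreover this unique root lies in the interval [0, θ★], where λ = (1 − cos φ₀)/(1 − cos φ₁) satisfies 0 < λ < 1 and θ★ = λ²/(1 − λ²) · (φ₁ − φ₀) > 0. -/

import Mathlib

open Real

/-- `p φ₀ δ θ = ∫_θ^{θ+δ} sin(u + φ₀ - θ)/√u du` -/
noncomputable def p (φ₀ δ θ : ℝ) : ℝ := ∫ u in θ..(θ + δ), Real.sin (u + φ₀ - θ) / Real.sqrt u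

namespace Stmt3Aux

open MeasureTheory Set

/-- shifted form of p -/
noncomputable def g (φ₀ φ₁ θ : ℝ) : ℝ :=
  ∫ v in (0:ℝ)..(φ₁ - φ₀), Real.sin (v + φ₀) / Real.sqrt (θ + v)

lemma p_eq (φ₀ φ₁ θ : ℝ) : p φ₀ (φ₁ - φ₀) θ = g φ₀ φ₁ θ := by
  unfold p g
  have h := intervalIntegral.integral_comp_add_right (a := (0:ℝ)) (b := φ₁ - φ₀)
    (fun u => Real.sin (u + φ₀ - θ) / Real.sqrt u) θ
  rw [zero_add] at h
  rw [show θ + (φ₁ - φ₀) = φ₁ - φ₀ + θ by ring, ← h]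
  apply intervalIntegral.integral_congr
  intro v _
  simp only
  rw [show v + θ + φ₀ - θ = v + φ₀ by ring, show v + θ = θ + v by ring]

lemma meas (φ₀ θ : ℝ) (s : Set ℝ) :
    AEStronglyMeasurable (fun v => Real.sin (v + φ₀) / Real.sqrt (θ + v))
      (volume.restrict s) := by
  apply Measurable.aestronglyMeasurable
  fun_prop

lemma intgr (φ₀ : ℝ) {θ a b : ℝ} (hθ : 0 ≤ θ) (ha : 0 ≤ a) (hb : 0 ≤ b) :
    IntervalIntegrable (fun v => Real.sin (v + φ₀) / Real.sqrt (θ + v)) volume a b := by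
  apply IntervalIntegrable.mono_fun
    (intervalIntegral.intervalIntegrable_rpow' (a := a) (b := b) (r := -(1/2)) (by norm_num))
    (meas φ₀ θ _)
  filter_upwards [ae_restrict_mem measurableSet_uIoc] with v hv
  have hv0 : 0 < v := lt_of_le_of_lt (le_min ha hb) hv.1
  have h1 : Real.sqrt v ≤ Real.sqrt (θ + v) := Real.sqrt_le_sqrt (by linarith)
  have h2 : (0:ℝ) < Real.sqrt v := Real.sqrt_pos.2 hv0
  have h3 : v ^ (-(1/2):ℝ) = (Real.sqrt v)⁻¹ := by
    rw [Real.rpow_neg hv0.le, Real.sqrt_eq_rpow]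
  rw [norm_div, Real.norm_eq_abs, Real.norm_eq_abs, Real.norm_eq_abs, h3,
    abs_of_nonneg (inv_nonneg.2 (Real.sqrt_nonneg v)),
    abs_of_nonneg (Real.sqrt_nonneg (θ + v)), ← one_div]
  exact div_le_div₀ zero_le_one (Real.abs_sin_le_one _) h2 h1


set_option linter.unusedSectionVars false

set_option linter.unusedSectionVars false

lemma sqrt_key {x y z w : ℝ} (hx : 0 ≤ x) (hy : 0 ≤ y) (hz : 0 ≤ z) (h : x * y < z * w) :
    Real.sqrt x * Real.sqrt y < Real.sqrt z * Real.sqrt w := by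
  rw [← Real.sqrt_mul hx, ← Real.sqrt_mul hz]
  exact Real.sqrt_lt_sqrt (mul_nonneg hx hy) h

lemma pt_pos {S s1 s2 s3 s4 : ℝ} (hs1 : 0 < s1) (hs2 : 0 < s2) (hs4 : 0 < s4)
    (hS : S < 0) (key : s2 * s4 < s1 * s3) :
    0 < S / s1 - s3 / s4 * (S / s2) := by
  rw [div_mul_div_comm, sub_pos, div_lt_div_iff₀ (mul_pos hs4 hs2) hs1]
  nlinarith [mul_lt_mul_of_pos_left key (neg_pos.2 hS)]

lemma pt_pos' {S s1 s2 s3 s4 : ℝ} (hs1 : 0 < s1) (hs2 : 0 < s2) (hs4 : 0 < s4)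
    (hS : 0 < S) (key : s1 * s3 < s2 * s4) :
    0 < S / s1 - s3 / s4 * (S / s2) := by
  rw [div_mul_div_comm, sub_pos, div_lt_div_iff₀ (mul_pos hs4 hs2) hs1]
  nlinarith [mul_lt_mul_of_pos_left key hS]

lemma g_sub (φ₀ φ₁ : ℝ) {θ θ' : ℝ} (hθ : 0 ≤ θ) (hθ' : 0 ≤ θ') (hδ : 0 ≤ φ₁ - φ₀) (c : ℝ) :
    g φ₀ φ₁ θ' - c * g φ₀ φ₁ θ = ∫ v in (0:ℝ)..(φ₁ - φ₀),
      (Real.sin (v + φ₀) / Real.sqrt (θ' + v) - c * (Real.sin (v + φ₀) / Real.sqrt (θ + v))) := by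
  unfold g
  rw [intervalIntegral.integral_sub (intgr φ₀ hθ' le_rfl hδ)
    ((intgr φ₀ hθ le_rfl hδ).const_mul c), intervalIntegral.integral_const_mul]

section Main
variable {φ₀ φ₁ : ℝ} (h0 : 0 < -φ₀) (h1 : -φ₀ < φ₁) (h2 : φ₁ < π)

include h0 h1 h2

lemma sin_neg_on {v : ℝ} (hv : 0 < v) (hv' : v < -φ₀) : Real.sin (v + φ₀) < 0 :=
  Real.sin_neg_of_neg_of_neg_pi_lt (by linarith) (by linarith)

lemma sin_pos_on {v : ℝ} (hv : -φ₀ < v) (hv' : v < φ₁ - φ₀) : 0 < Real.sin (v + φ₀) :=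
  Real.sin_pos_of_pos_of_lt_pi (by linarith) (by linarith)

/-- if `g θ = 0` and `θ < θ'` then `g θ' > 0`. -/
lemma cross_pos {θ θ' : ℝ} (hθ : 0 ≤ θ) (hθθ' : θ < θ') (hz : g φ₀ φ₁ θ = 0) :
    0 < g φ₀ φ₁ θ' := by
  have hθ' : 0 ≤ θ' := le_of_lt (lt_of_le_of_lt hθ hθθ')
  have hv0 : (0:ℝ) < -φ₀ := h0
  have hv0δ : -φ₀ < φ₁ - φ₀ := by linarith
  have hδ : (0:ℝ) < φ₁ - φ₀ := by linarith
  set c : ℝ := Real.sqrt (θ + -φ₀) / Real.sqrt (θ' + -φ₀) with hcdef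
  set h : ℝ → ℝ := fun v =>
    Real.sin (v + φ₀) / Real.sqrt (θ' + v) - c * (Real.sin (v + φ₀) / Real.sqrt (θ + v))
    with hhdef
  have hint : ∀ a b : ℝ, 0 ≤ a → 0 ≤ b → IntervalIntegrable h volume a b := fun a b ha hb =>
    ((intgr φ₀ hθ' ha hb).sub ((intgr φ₀ hθ ha hb).const_mul c))
  have hgθ' : g φ₀ φ₁ θ' = ∫ v in (0:ℝ)..(φ₁ - φ₀), h v := by
    have e := g_sub φ₀ φ₁ hθ hθ' hδ.le c
    rw [hz, mul_zero, sub_zero] at e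
    exact e
  have hkey1 : ∀ v ∈ Ioo (0:ℝ) (-φ₀), 0 < h v := by
    intro v hv
    simp only [hhdef, hcdef]
    apply pt_pos (Real.sqrt_pos.2 (by linarith [hv.1])) (Real.sqrt_pos.2 (by linarith [hv.1]))
      (Real.sqrt_pos.2 (by linarith)) (sin_neg_on h0 h1 h2 hv.1 hv.2)
    exact sqrt_key (by linarith [hv.1]) (by linarith) (by linarith [hv.1])
      (by nlinarith [hv.1, hv.2])
  have hkey2 : ∀ v ∈ Ioo (-φ₀) (φ₁ - φ₀), 0 < h v := by
    intro v hv
    simp only [hhdef, hcdef]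
    apply pt_pos' (Real.sqrt_pos.2 (by linarith [hv.1])) (Real.sqrt_pos.2 (by linarith [hv.1]))
      (Real.sqrt_pos.2 (by linarith)) (sin_pos_on h0 h1 h2 hv.1 hv.2)
    exact sqrt_key (by linarith [hv.1]) (by linarith) (by linarith [hv.1])
      (by nlinarith [hv.1, hv.2])
  have hs : (∫ v in (0:ℝ)..(-φ₀), h v) + ∫ v in (-φ₀)..(φ₁ - φ₀), h v
      = ∫ v in (0:ℝ)..(φ₁ - φ₀), h v :=
    intervalIntegral.integral_add_adjacent_intervals (hint 0 (-φ₀) le_rfl hv0.le)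
      (hint (-φ₀) (φ₁ - φ₀) hv0.le hδ.le)
  have p1 : 0 < ∫ v in (0:ℝ)..(-φ₀), h v :=
    intervalIntegral.intervalIntegral_pos_of_pos_on (hint 0 (-φ₀) le_rfl hv0.le) hkey1 hv0
  have p2 : 0 < ∫ v in (-φ₀)..(φ₁ - φ₀), h v :=
    intervalIntegral.intervalIntegral_pos_of_pos_on
      (hint (-φ₀) (φ₁ - φ₀) hv0.le hδ.le) hkey2 hv0δ
  rw [hgθ', ← hs]
  linarith

/-- if `g θ = 0` and `0 ≤ θ' < θ` then `g θ' < 0`. -/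
lemma cross_neg {θ θ' : ℝ} (hθ' : 0 ≤ θ') (hθθ' : θ' < θ) (hz : g φ₀ φ₁ θ = 0) :
    g φ₀ φ₁ θ' < 0 := by
  have hθ : 0 ≤ θ := le_of_lt (lt_of_le_of_lt hθ' hθθ')
  have hv0 : (0:ℝ) < -φ₀ := h0
  have hv0δ : -φ₀ < φ₁ - φ₀ := by linarith
  have hδ : (0:ℝ) < φ₁ - φ₀ := by linarith
  set c : ℝ := Real.sqrt (θ + -φ₀) / Real.sqrt (θ' + -φ₀) with hcdef
  set h : ℝ → ℝ := fun v =>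
    -(Real.sin (v + φ₀) / Real.sqrt (θ' + v) - c * (Real.sin (v + φ₀) / Real.sqrt (θ + v)))
    with hhdef
  have hint : ∀ a b : ℝ, 0 ≤ a → 0 ≤ b → IntervalIntegrable h volume a b := fun a b ha hb =>
    ((intgr φ₀ hθ' ha hb).sub ((intgr φ₀ hθ ha hb).const_mul c)).neg
  have hgθ' : - g φ₀ φ₁ θ' = ∫ v in (0:ℝ)..(φ₁ - φ₀), h v := by
    have e := g_sub φ₀ φ₁ hθ hθ' hδ.le c
    rw [hz, mul_zero, sub_zero] at e
    rw [hhdef, intervalIntegral.integral_neg, ← e]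
  have hkey1 : ∀ v ∈ Ioo (0:ℝ) (-φ₀), 0 < h v := by
    intro v hv
    have hrw : h v = (-Real.sin (v + φ₀)) / Real.sqrt (θ' + v)
        - c * ((-Real.sin (v + φ₀)) / Real.sqrt (θ + v)) := by
      simp only [hhdef]; ring
    rw [hrw, hcdef]
    apply pt_pos' (Real.sqrt_pos.2 (by linarith [hv.1])) (Real.sqrt_pos.2 (by linarith [hv.1]))
      (Real.sqrt_pos.2 (by linarith))
      (neg_pos.2 (sin_neg_on h0 h1 h2 hv.1 hv.2))
    exact sqrt_key (by linarith [hv.1]) (by linarith) (by linarith [hv.1])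
      (by nlinarith [hv.1, hv.2])
  have hkey2 : ∀ v ∈ Ioo (-φ₀) (φ₁ - φ₀), 0 < h v := by
    intro v hv
    have hrw : h v = (-Real.sin (v + φ₀)) / Real.sqrt (θ' + v)
        - c * ((-Real.sin (v + φ₀)) / Real.sqrt (θ + v)) := by
      simp only [hhdef]; ring
    rw [hrw, hcdef]
    apply pt_pos (Real.sqrt_pos.2 (by linarith [hv.1])) (Real.sqrt_pos.2 (by linarith [hv.1]))
      (Real.sqrt_pos.2 (by linarith))
      (neg_neg_iff_pos.2 (sin_pos_on h0 h1 h2 hv.1 hv.2))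
    exact sqrt_key (by linarith [hv.1]) (by linarith) (by linarith [hv.1])
      (by nlinarith [hv.1, hv.2])
  have hs : (∫ v in (0:ℝ)..(-φ₀), h v) + ∫ v in (-φ₀)..(φ₁ - φ₀), h v
      = ∫ v in (0:ℝ)..(φ₁ - φ₀), h v :=
    intervalIntegral.integral_add_adjacent_intervals (hint 0 (-φ₀) le_rfl hv0.le)
      (hint (-φ₀) (φ₁ - φ₀) hv0.le hδ.le)
  have p1 : 0 < ∫ v in (0:ℝ)..(-φ₀), h v :=
    intervalIntegral.intervalIntegral_pos_of_pos_on (hint 0 (-φ₀) le_rfl hv0.le) hkey1 hv0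
  have p2 : 0 < ∫ v in (-φ₀)..(φ₁ - φ₀), h v :=
    intervalIntegral.intervalIntegral_pos_of_pos_on
      (hint (-φ₀) (φ₁ - φ₀) hv0.le hδ.le) hkey2 hv0δ
  have : 0 < - g φ₀ φ₁ θ' := by rw [hgθ', ← hs]; linarith
  linarith

omit h0 h1 h2 in
lemma sin_int (φ₀ a b : ℝ) :
    ∫ v in a..b, Real.sin (v + φ₀) = Real.cos (a + φ₀) - Real.cos (b + φ₀) := by
  rw [intervalIntegral.integral_comp_add_right (fun x => Real.sin x) φ₀, integral_sin]

lemma cos_lt : Real.cos φ₁ < Real.cos φ₀ := by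
  have := Real.cos_lt_cos_of_nonneg_of_le_pi (le_of_lt h0) h2.le h1
  rwa [Real.cos_neg] at this

lemma cos0_lt_one : Real.cos φ₀ < 1 := by
  have := Real.cos_lt_cos_of_nonneg_of_le_pi (le_refl 0) (by linarith : -φ₀ ≤ π) h0
  rwa [Real.cos_neg, Real.cos_zero] at this

lemma cos1_lt_one : Real.cos φ₁ < 1 := by
  have := Real.cos_lt_cos_of_nonneg_of_le_pi (le_refl 0) h2.le (by linarith : (0:ℝ) < φ₁)
  rwa [Real.cos_zero] at this

/-- strict positivity past the threshold θ★ -/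
lemma g_pos_of_gt {θ : ℝ}
    (hθ : ((1 - Real.cos φ₀) / (1 - Real.cos φ₁)) ^ 2 /
        (1 - ((1 - Real.cos φ₀) / (1 - Real.cos φ₁)) ^ 2) * (φ₁ - φ₀) < θ) :
    0 < g φ₀ φ₁ θ := by
  have hv0 : (0:ℝ) < -φ₀ := h0
  have hv0δ : -φ₀ < φ₁ - φ₀ := by linarith
  have hδ : (0:ℝ) < φ₁ - φ₀ := by linarith
  have hA : 0 < 1 - Real.cos φ₀ := by linarith [cos0_lt_one h0 h1 h2]
  have hB : 0 < 1 - Real.cos φ₁ := by linarith [cos1_lt_one h0 h1 h2]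
  have hAB : 1 - Real.cos φ₀ < 1 - Real.cos φ₁ := by linarith [cos_lt h0 h1 h2]
  set A := 1 - Real.cos φ₀ with hAdef
  set B := 1 - Real.cos φ₁ with hBdef
  have hlam : 0 < A / B := div_pos hA hB
  have hlam1 : A / B < 1 := (div_lt_one hB).2 hAB
  have hl2 : 0 < 1 - (A / B) ^ 2 := by nlinarith
  have hθpos : 0 < θ := lt_of_le_of_lt (by positivity) hθ
  -- θ > lam² (θ + δ)
  have step1 : (A / B) ^ 2 * (θ + (φ₁ - φ₀)) < θ := by
    rw [div_mul_eq_mul_div, div_lt_iff₀ hl2] at hθ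
    nlinarith
  -- lam √(θ+δ) < √θ
  have step2 : A / B * Real.sqrt (θ + (φ₁ - φ₀)) < Real.sqrt θ := by
    rw [show A / B * Real.sqrt (θ + (φ₁ - φ₀)) = Real.sqrt ((A/B)^2 * (θ + (φ₁ - φ₀))) by
      rw [Real.sqrt_mul (by positivity), Real.sqrt_sq hlam.le]]
    exact Real.sqrt_lt_sqrt (by positivity) step1
  have hsθ : 0 < Real.sqrt θ := Real.sqrt_pos.2 hθpos
  have hsδ : 0 < Real.sqrt (θ + (φ₁ - φ₀)) := Real.sqrt_pos.2 (by linarith)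
  have step3 : A * Real.sqrt (θ + (φ₁ - φ₀)) < B * Real.sqrt θ := by
    have := mul_lt_mul_of_pos_left step2 hB
    rw [← mul_assoc, mul_div_cancel₀ _ (ne_of_gt hB)] at this
    linarith
  have step4 : A / Real.sqrt θ < B / Real.sqrt (θ + (φ₁ - φ₀)) :=
    (div_lt_div_iff₀ hsθ hsδ).2 step3
  -- integral lower bounds
  have ibd1 : (Real.cos φ₀ - 1) * (Real.sqrt θ)⁻¹ ≤
      ∫ v in (0:ℝ)..(-φ₀), Real.sin (v + φ₀) / Real.sqrt (θ + v) := by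
    have e : ∫ v in (0:ℝ)..(-φ₀), Real.sin (v + φ₀) * (Real.sqrt θ)⁻¹
        = (Real.cos φ₀ - 1) * (Real.sqrt θ)⁻¹ := by
      rw [intervalIntegral.integral_mul_const, sin_int]
      norm_num
    rw [← e]
    apply intervalIntegral.integral_mono_on hv0.le
      (((Real.continuous_sin.comp (continuous_id.add continuous_const)).mul
        continuous_const).intervalIntegrable _ _)
      (intgr φ₀ hθpos.le le_rfl hv0.le)
    intro v hv
    have hsin : Real.sin (v + φ₀) ≤ 0 :=
      Real.sin_nonpos_of_nonpos_of_neg_pi_le (by linarith [hv.2]) (by linarith [hv.1])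
    have hinv : (Real.sqrt (θ + v))⁻¹ ≤ (Real.sqrt θ)⁻¹ := by
      apply inv_anti₀ hsθ (Real.sqrt_le_sqrt (by linarith [hv.1]))
    rw [div_eq_mul_inv]
    exact mul_le_mul_of_nonpos_left hinv hsin
  have ibd2 : (1 - Real.cos φ₁) * (Real.sqrt (θ + (φ₁ - φ₀)))⁻¹ ≤
      ∫ v in (-φ₀)..(φ₁ - φ₀), Real.sin (v + φ₀) / Real.sqrt (θ + v) := by
    have e : ∫ v in (-φ₀)..(φ₁ - φ₀), Real.sin (v + φ₀) * (Real.sqrt (θ + (φ₁ - φ₀)))⁻¹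
        = (1 - Real.cos φ₁) * (Real.sqrt (θ + (φ₁ - φ₀)))⁻¹ := by
      rw [intervalIntegral.integral_mul_const, sin_int]
      norm_num
    rw [← e]
    apply intervalIntegral.integral_mono_on hv0δ.le
      (((Real.continuous_sin.comp (continuous_id.add continuous_const)).mul
        continuous_const).intervalIntegrable _ _)
      (intgr φ₀ hθpos.le hv0.le hδ.le)
    intro v hv
    have hsin : 0 ≤ Real.sin (v + φ₀) :=
      Real.sin_nonneg_of_nonneg_of_le_pi (by linarith [hv.1]) (by linarith [hv.2])
    have hinv : (Real.sqrt (θ + (φ₁ - φ₀)))⁻¹ ≤ (Real.sqrt (θ + v))⁻¹ := by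
      apply inv_anti₀ (Real.sqrt_pos.2 (by linarith [hv.1]))
        (Real.sqrt_le_sqrt (by linarith [hv.2]))
    rw [div_eq_mul_inv]
    exact mul_le_mul_of_nonneg_left hinv hsin
  have hsplit : g φ₀ φ₁ θ = (∫ v in (0:ℝ)..(-φ₀), Real.sin (v + φ₀) / Real.sqrt (θ + v))
      + ∫ v in (-φ₀)..(φ₁ - φ₀), Real.sin (v + φ₀) / Real.sqrt (θ + v) := by
    unfold g
    rw [intervalIntegral.integral_add_adjacent_intervals (intgr φ₀ hθpos.le le_rfl hv0.le)
      (intgr φ₀ hθpos.le hv0.le hδ.le)]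
  rw [hsplit]
  have r1 : (Real.cos φ₀ - 1) * (Real.sqrt θ)⁻¹ = -(A / Real.sqrt θ) := by
    rw [hAdef]; field_simp; ring
  have r2 : (1 - Real.cos φ₁) * (Real.sqrt (θ + (φ₁ - φ₀)))⁻¹
      = B / Real.sqrt (θ + (φ₁ - φ₀)) := by
    rw [hBdef]; field_simp
  rw [r1] at ibd1
  rw [r2] at ibd2
  linarith

/-- continuity of `g` on `[0, ∞)` -/
lemma g_contOn : ContinuousOn (fun θ => g φ₀ φ₁ θ) (Ici (0:ℝ)) := by
  have hδ : (0:ℝ) < φ₁ - φ₀ := by linarith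
  intro θ₀ hθ₀
  unfold g
  apply intervalIntegral.continuousWithinAt_of_dominated_interval
    (bound := fun v : ℝ => v ^ (-(1/2) : ℝ))
  · exact Filter.Eventually.of_forall fun θ => meas φ₀ θ _
  · filter_upwards [self_mem_nhdsWithin] with θ hθ
    apply Filter.Eventually.of_forall
    intro v hv
    rw [Set.uIoc_of_le hδ.le] at hv
    have hv0 : 0 < v := hv.1
    have h1 : Real.sqrt v ≤ Real.sqrt (θ + v) := Real.sqrt_le_sqrt (by
      have : (0:ℝ) ≤ θ := hθ
      linarith)
    have h2 : (0:ℝ) < Real.sqrt v := Real.sqrt_pos.2 hv0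
    have h3 : v ^ (-(1/2):ℝ) = (Real.sqrt v)⁻¹ := by
      rw [Real.rpow_neg hv0.le, Real.sqrt_eq_rpow]
    rw [norm_div, Real.norm_eq_abs, Real.norm_eq_abs, h3, ← one_div,
      abs_of_nonneg (Real.sqrt_nonneg (θ + v))]
    exact div_le_div₀ zero_le_one (Real.abs_sin_le_one _) h2 h1
  · exact intervalIntegral.intervalIntegrable_rpow' (by norm_num)
  · apply Filter.Eventually.of_forall
    intro v hv
    rw [Set.uIoc_of_le hδ.le] at hv
    apply ContinuousAt.continuousWithinAt
    apply ContinuousAt.div continuousAt_const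
    · exact (Real.continuous_sqrt.comp (continuous_id.add continuous_const)).continuousAt
    · have : (0:ℝ) ≤ θ₀ := hθ₀
      exact ne_of_gt (Real.sqrt_pos.2 (by linarith [hv.1]))

end Main
end Stmt3Aux

theorem stmt3 (φ₀ φ₁ : ℝ) (h0 : 0 < -φ₀) (h1 : -φ₀ < φ₁) (h2 : φ₁ < π)
    (lam θs : ℝ)
    (hlam : lam = (1 - Real.cos φ₀) / (1 - Real.cos φ₁))
    (hθs : θs = lam ^ 2 / (1 - lam ^ 2) * (φ₁ - φ₀)) :
    (0 < p φ₀ (φ₁ - φ₀) 0 → ∀ θ, 0 ≤ θ → p φ₀ (φ₁ - φ₀) θ ≠ 0) ∧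
    (p φ₀ (φ₁ - φ₀) 0 ≤ 0 →
      (0 < lam ∧ lam < 1) ∧ 0 < θs ∧
      (∃! θ : ℝ, 0 ≤ θ ∧ p φ₀ (φ₁ - φ₀) θ = 0) ∧
      (∀ θ : ℝ, 0 ≤ θ → p φ₀ (φ₁ - φ₀) θ = 0 → θ ≤ θs)) := by
  have hδ : (0:ℝ) < φ₁ - φ₀ := by linarith
  constructor
  · intro hp0 θ hθ hz
    rw [Stmt3Aux.p_eq] at hz hp0
    rcases eq_or_lt_of_le hθ with h | h
    · rw [← h] at hz; linarith
    · linarith [Stmt3Aux.cross_neg h0 h1 h2 le_rfl h hz]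
  · intro hp0
    rw [Stmt3Aux.p_eq] at hp0
    have hA : 0 < 1 - Real.cos φ₀ := by linarith [Stmt3Aux.cos0_lt_one h0 h1 h2]
    have hB : 0 < 1 - Real.cos φ₁ := by linarith [Stmt3Aux.cos1_lt_one h0 h1 h2]
    have hAB : 1 - Real.cos φ₀ < 1 - Real.cos φ₁ := by linarith [Stmt3Aux.cos_lt h0 h1 h2]
    have hlam0 : 0 < lam := by rw [hlam]; exact div_pos hA hB
    have hlam1 : lam < 1 := by rw [hlam]; exact (div_lt_one hB).2 hAB
    have hl2 : 0 < 1 - lam ^ 2 := by nlinarith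
    have hθspos : 0 < θs := by
      rw [hθs]; exact mul_pos (div_pos (pow_pos hlam0 2) hl2) hδ
    have hgpos : ∀ t, θs < t → 0 < Stmt3Aux.g φ₀ φ₁ t := by
      intro t ht
      apply Stmt3Aux.g_pos_of_gt h0 h1 h2
      rw [← hlam, ← hθs]
      exact ht
    have hcont : ContinuousOn (fun θ => Stmt3Aux.g φ₀ φ₁ θ) (Set.Icc 0 (θs + 1)) :=
      (Stmt3Aux.g_contOn h0 h1 h2).mono (fun x hx => hx.1)
    have hivt := intermediate_value_Icc (by linarith : (0:ℝ) ≤ θs + 1) hcont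
    have hmem : (0:ℝ) ∈ Set.Icc (Stmt3Aux.g φ₀ φ₁ 0) (Stmt3Aux.g φ₀ φ₁ (θs + 1)) :=
      ⟨hp0, le_of_lt (hgpos (θs + 1) (by linarith))⟩
    obtain ⟨θ, hθmem, hθeq⟩ := hivt hmem
    simp only at hθeq
    refine ⟨⟨hlam0, hlam1⟩, hθspos, ?_, ?_⟩
    · refine ⟨θ, ⟨hθmem.1, by rw [Stmt3Aux.p_eq]; exact hθeq⟩, ?_⟩
      rintro y ⟨hy0, hyz⟩
      rw [Stmt3Aux.p_eq] at hyz
      by_contra hne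
      rcases lt_or_gt_of_ne hne with h | h
      · have := Stmt3Aux.cross_pos h0 h1 h2 hy0 h hyz
        rw [hθeq] at this; exact lt_irrefl 0 this
      · have := Stmt3Aux.cross_pos h0 h1 h2 hθmem.1 h hθeq
        rw [hyz] at this; exact lt_irrefl 0 this
    · intro y hy0 hyz
      by_contra hgt
      push_neg at hgt
      rw [Stmt3Aux.p_eq] at hyz
      exact absurd hyz (ne_of_gt (hgpos y hgt))
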